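/- Let C be a finite family of nonempty bounded open intervals of the real line, where each c ∈ C is given by endpoints α(c) < β(c), and suppose the family is pairwise non-nested: for any two distinct c, c' ∈ C, neither (α(c), β(c)) ⊆ (α(c'), β(c')) nor (α(c'), β(c')) ⊆ (α(c), β(c)). Call a subfamily independent if its members are pairwise disjoint as intervals. Then there exists an independent subfamily M ⊆ C of maximum cardinality (among all independent subfamilies of C) such that for every c ∈ C \ M there is some c' ∈ M with α(c) ∈ (α(c'), β(c')). -/

import Mathlib

/-- A subfamily of intervals (given by endpoint pairs) is *independent* if its
members are pairwise disjoint as open intervals. -/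
def IndepFam (M : Finset (ℝ × ℝ)) : Prop :=
  ∀ c ∈ M, ∀ c' ∈ M, c ≠ c' →
    Disjoint (Set.Ioo c.1 c.2) (Set.Ioo c'.1 c'.2)

/-- Two nonempty, intersecting, non-nested intervals with `a` outside the second
interleave as `a < a' < b < b'`. -/
lemma interleave {a b a' b' : ℝ}
    (h1 : ¬ Disjoint (Set.Ioo a b) (Set.Ioo a' b'))
    (h2 : ¬ Set.Ioo a b ⊆ Set.Ioo a' b')
    (h3 : ¬ Set.Ioo a' b' ⊆ Set.Ioo a b)
    (h4 : a ∉ Set.Ioo a' b') : a < a' ∧ a' < b ∧ b < b' := by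
  obtain ⟨x, hx1, hx2⟩ := Set.not_disjoint_iff.mp h1
  obtain ⟨hax, hxb⟩ := hx1
  obtain ⟨ha'x, hxb'⟩ := hx2
  have haa' : a ≤ a' := by
    rcases lt_or_ge a' a with h | h
    · exact absurd ⟨h, lt_trans hax hxb'⟩ h4
    · exact h
  have hbb' : b < b' := by
    by_contra h
    push_neg at h
    exact h3 (Set.Ioo_subset_Ioo haa' h)
  have haa'' : a < a' := by
    rcases lt_or_eq_of_le haa' with h | h
    · exact h
    · exfalso; exact h2 (h ▸ Set.Ioo_subset_Ioo le_rfl hbb'.le)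
  exact ⟨haa'', lt_trans ha'x hxb, hbb'⟩

/-- For a finite, pairwise non-nested family of nonempty open intervals there is a
maximum-cardinality independent subfamily `M` such that every interval outside `M`
has its left endpoint inside some interval of `M`. -/
theorem exists_max_independent_subfamily
    (C : Finset (ℝ × ℝ))
    (hne : ∀ c ∈ C, c.1 < c.2)
    (hnonnested : ∀ c ∈ C, ∀ c' ∈ C, c ≠ c' →
      ¬ Set.Ioo c.1 c.2 ⊆ Set.Ioo c'.1 c'.2 ∧
      ¬ Set.Ioo c'.1 c'.2 ⊆ Set.Ioo c.1 c.2) :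
    ∃ M ⊆ C, IndepFam M ∧
      (∀ M' ⊆ C, IndepFam M' → M'.card ≤ M.card) ∧
      (∀ c ∈ C \ M, ∃ c' ∈ M, c.1 ∈ Set.Ioo c'.1 c'.2) := by
  classical
  -- the finset of independent subfamilies
  set S : Finset (Finset (ℝ × ℝ)) := C.powerset.filter (fun M => IndepFam M) with hS
  have hSne : S.Nonempty := ⟨∅, by simp [hS, IndepFam]⟩
  -- a maximum-cardinality member
  obtain ⟨M₀, hM₀S, hM₀max⟩ := S.exists_max_image Finset.card hSne
  set n := M₀.card with hn
  -- among maximum-cardinality members, minimize the sum of left endpoints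
  set T : Finset (Finset (ℝ × ℝ)) := S.filter (fun M => M.card = n) with hT
  have hTne : T.Nonempty := ⟨M₀, by simp [hT, hM₀S, hn]⟩
  obtain ⟨M, hMT, hMmin⟩ := T.exists_min_image (fun M => ∑ x ∈ M, x.1) hTne
  have hMS : M ∈ S := (Finset.mem_filter.mp hMT).1
  have hMcard : M.card = n := (Finset.mem_filter.mp hMT).2
  have hMC : M ⊆ C := Finset.mem_powerset.mp (Finset.mem_filter.mp hMS).1
  have hMindep : IndepFam M := (Finset.mem_filter.mp hMS).2
  have hmax : ∀ M' ⊆ C, IndepFam M' → M'.card ≤ M.card := by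
    intro M' hM'C hM'ind
    rw [hMcard]
    exact hM₀max M' (Finset.mem_filter.mpr ⟨Finset.mem_powerset.mpr hM'C, hM'ind⟩)
  refine ⟨M, hMC, hMindep, hmax, ?_⟩
  intro c hc
  obtain ⟨hcC, hcM⟩ := Finset.mem_sdiff.mp hc
  by_contra hcon
  push_neg at hcon
  -- c must intersect some member of M (else insert it)
  have hexists : ∃ c' ∈ M, ¬ Disjoint (Set.Ioo c.1 c.2) (Set.Ioo c'.1 c'.2) := by
    by_contra h
    push_neg at h
    have hind : IndepFam (insert c M) := by
      intro d hd e he hde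
      rcases Finset.mem_insert.mp hd with rfl | hd'
      · rcases Finset.mem_insert.mp he with rfl | he'
        · exact absurd rfl hde
        · exact h e he'
      · rcases Finset.mem_insert.mp he with rfl | he'
        · exact (h d hd').symm
        · exact hMindep d hd' e he' hde
    have hsub : insert c M ⊆ C := Finset.insert_subset hcC hMC
    have := hmax (insert c M) hsub hind
    rw [Finset.card_insert_of_notMem hcM] at this
    omega
  obtain ⟨c', hc'M, hc'⟩ := hexists
  have hc'C : c' ∈ C := hMC hc'M
  have hcc' : c ≠ c' := fun h => hcM (h ▸ hc'M)
  obtain ⟨hns1, hns2⟩ := hnonnested c hcC c' hc'C hcc'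
  obtain ⟨hlt1, hlt2, hlt3⟩ := interleave hc' hns1 hns2 (hcon c' hc'M)
  -- c intersects only c' in M
  have huniq : ∀ d ∈ M, d ≠ c' → Disjoint (Set.Ioo c.1 c.2) (Set.Ioo d.1 d.2) := by
    intro d hdM hdc'
    by_contra hnd
    have hdC : d ∈ C := hMC hdM
    have hcd : c ≠ d := fun h => hcM (h ▸ hdM)
    obtain ⟨hns1', hns2'⟩ := hnonnested c hcC d hdC hcd
    obtain ⟨hlt1', hlt2', hlt3'⟩ := interleave hnd hns1' hns2' (hcon d hdM)
    -- c' and d intersect: point between max of lefts and c.2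
    set x := (max c'.1 d.1 + c.2) / 2 with hx
    have hmaxlt : max c'.1 d.1 < c.2 := max_lt hlt2 hlt2'
    have hx1 : max c'.1 d.1 < x := by rw [hx]; linarith
    have hx2 : x < c.2 := by rw [hx]; linarith
    have hdisj := hMindep d hdM c' hc'M hdc'
    have : x ∈ Set.Ioo d.1 d.2 ∩ Set.Ioo c'.1 c'.2 :=
      ⟨⟨lt_of_le_of_lt (le_max_right _ _) hx1, lt_trans hx2 hlt3'⟩,
       ⟨lt_of_le_of_lt (le_max_left _ _) hx1, lt_trans hx2 hlt3⟩⟩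
    exact Set.not_disjoint_iff.mpr ⟨x, this.1, this.2⟩ hdisj
  -- the swap M' = insert c (M.erase c')
  set M' : Finset (ℝ × ℝ) := insert c (M.erase c') with hM'
  have hcnotin : c ∉ M.erase c' := fun h => hcM (Finset.mem_of_mem_erase h)
  have hM'C : M' ⊆ C :=
    Finset.insert_subset hcC ((Finset.erase_subset _ _).trans hMC)
  have hM'ind : IndepFam M' := by
    intro d hd e he hde
    have key : ∀ f ∈ M.erase c', Disjoint (Set.Ioo c.1 c.2) (Set.Ioo f.1 f.2) := by
      intro f hf
      exact huniq f (Finset.mem_of_mem_erase hf) (Finset.ne_of_mem_erase hf)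
    rcases Finset.mem_insert.mp hd with rfl | hd'
    · rcases Finset.mem_insert.mp he with rfl | he'
      · exact absurd rfl hde
      · exact key e he'
    · rcases Finset.mem_insert.mp he with rfl | he'
      · exact (key d hd').symm
      · exact hMindep d (Finset.mem_of_mem_erase hd') e (Finset.mem_of_mem_erase he') hde
  have hM'card : M'.card = n := by
    rw [hM', Finset.card_insert_of_notMem hcnotin,
      Finset.card_erase_of_mem hc'M, hMcard]
    have : 0 < M.card := Finset.card_pos.mpr ⟨c', hc'M⟩
    omega
  have hM'T : M' ∈ T := by
    rw [hT, Finset.mem_filter]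
    exact ⟨Finset.mem_filter.mpr ⟨Finset.mem_powerset.mpr hM'C, hM'ind⟩, hM'card⟩
  have hsum := hMmin M' hM'T
  have hsum1 : ∑ x ∈ M', x.1 = c.1 + ∑ x ∈ M.erase c', x.1 := by
    rw [hM', Finset.sum_insert hcnotin]
  have hsum2 : ∑ x ∈ M, x.1 = c'.1 + ∑ x ∈ M.erase c', x.1 :=
    (Finset.add_sum_erase M (fun x => x.1) hc'M).symm
  rw [hsum1, hsum2] at hsum
  linarith
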